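/- Given nonnegative integers p_1 = 0 < p_2 < ⋯ < p_n with pairwise distinct residues mod n, the numbers k_{ij} = ⌊(p_{j+1} − p_i)/n⌋ for 1 ≤ i ≤ j ≤ n−1 satisfy k_{it} + k_{t+1,j} ≤ k_{ij} ≤ k_{it} + k_{t+1,j} + 1 for all i ≤ t < j, and hence are the Shi coordinates of a dominant alcove. -/

import Mathlib

open Finset

namespace Shi

lemma ediv_sandwich {n A B : ℤ} (hn : 0 < n) :
    A / n + B / n ≤ (A + B) / n ∧ (A + B) / n ≤ A / n + B / n + 1 := by
  constructor
  · rw [Int.le_ediv_iff_mul_le hn, add_mul]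
    have hA := Int.ediv_mul_le A (by omega : n ≠ 0)
    have hB := Int.ediv_mul_le B (by omega : n ≠ 0)
    omega
  · have h : (A + B) / n < A / n + B / n + 2 := by
      rw [Int.ediv_lt_iff_lt_mul hn]
      have hA := Int.lt_ediv_add_one_mul_self A hn
      have hB := Int.lt_ediv_add_one_mul_self B hn
      nlinarith
    omega

/-- if `p_1 = 0 < p_2 < ⋯ < p_n` have pairwise distinct residues mod `n`,
then `k_{ij} = ⌊(p_{j+1} - p_i)/n⌋` satisfies Shi's inequalities, and hence these are the
Shi coordinates of a dominant alcove. -/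
theorem floor_coords_are_alcove (n : ℕ) (hn : 2 ≤ n) (p : ℕ → ℕ) (hp0 : p 0 = 0)
    (hmono : ∀ i j, i < j → j < n → p i < p j)
    (hres : ∀ i j, i < n → j < n → p i % n = p j % n → i = j) :
    (∀ i t j, i ≤ t → t < j → j + 2 ≤ n →
      ((p (t + 1) : ℤ) - p i) / n + ((p (j + 1) : ℤ) - p (t + 1)) / n
          ≤ ((p (j + 1) : ℤ) - p i) / n ∧
      ((p (j + 1) : ℤ) - p i) / n
          ≤ ((p (t + 1) : ℤ) - p i) / n + ((p (j + 1) : ℤ) - p (t + 1)) / n + 1) ∧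
    (∀ i j, i ≤ j → j + 2 ≤ n → 0 ≤ ((p (j + 1) : ℤ) - p i) / n) ∧
    ∃ x : ℕ → ℝ, (∑ i ∈ Finset.range n, x i = 0) ∧
      ∀ i j, i ≤ j → j + 2 ≤ n →
        ((((p (j + 1) : ℤ) - p i) / n : ℤ) : ℝ) < x i - x (j + 1) ∧
        x i - x (j + 1) < ((((p (j + 1) : ℤ) - p i) / n : ℤ) : ℝ) + 1 := by
  have hn0 : (0 : ℤ) < (n : ℤ) := by exact_mod_cast (by omega : 0 < n)
  refine ⟨?_, ?_, ?_⟩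
  · intro i t j hit htj hj2
    have := ediv_sandwich (A := ((p (t + 1) : ℤ) - p i))
      (B := ((p (j + 1) : ℤ) - p (t + 1))) hn0
    have heq : ((p (t + 1) : ℤ) - p i) + ((p (j + 1) : ℤ) - p (t + 1))
        = ((p (j + 1) : ℤ) - p i) := by ring
    rw [heq] at this
    exact this
  · intro i j hij hj2
    have h : p i ≤ p (j + 1) := le_of_lt (hmono i (j + 1) (by omega) (by omega))
    have h' : (p i : ℤ) ≤ (p (j + 1) : ℤ) := by exact_mod_cast h
    exact Int.ediv_nonneg (by linarith) (le_of_lt hn0)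
  · set S : ℝ := ∑ i ∈ Finset.range n, (p i : ℝ) with hS
    refine ⟨fun i => S / (n * n) - (p i : ℝ) / n, ?_, ?_⟩
    · have hnR : (n : ℝ) ≠ 0 := by positivity
      rw [Finset.sum_sub_distrib, Finset.sum_const, Finset.card_range,
        ← Finset.sum_div, ← hS]
      field_simp
      ring_nf
      rw [mul_comm (_ ^ 2) S, mul_assoc, ← mul_pow, mul_inv_cancel₀ hnR]
      ring
    · intro i j hij hj2
      have hlt : p i < p (j + 1) := hmono i (j + 1) (by omega) (by omega)
      set D : ℤ := ((p (j + 1) : ℤ) - p i) with hD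
      have hdiff : (S / (n * n) - (p i : ℝ) / n) - (S / (n * n) - (p (j + 1) : ℝ) / n)
          = (D : ℝ) / n := by
        push_cast [hD]
        ring
      rw [hdiff]
      have hndvd : ¬ ((n : ℤ) ∣ D) := by
        intro hdvd
        have hmod : (p (j + 1) : ℤ) % n = (p i : ℤ) % n :=
          Int.emod_eq_emod_iff_emod_sub_eq_zero.2 (Int.emod_eq_zero_of_dvd hdvd)
        have hmodN : p (j + 1) % n = p i % n := by exact_mod_cast hmod
        have : j + 1 = i := hres (j + 1) i (by omega) (by omega) hmodN
        omega
      have hknD : D / n * n < D := by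
        have h1 := Int.ediv_mul_le D (by omega : (n : ℤ) ≠ 0)
        rcases lt_or_eq_of_le h1 with h | h
        · exact h
        · exact absurd ⟨D / n, by linarith⟩ hndvd
      have hDk1 : D < (D / n + 1) * n := Int.lt_ediv_add_one_mul_self D hn0
      have hnR : (0 : ℝ) < (n : ℝ) := by exact_mod_cast (by omega : 0 < n)
      constructor
      · rw [lt_div_iff₀ hnR]
        exact_mod_cast hknD
      · rw [div_lt_iff₀ hnR]
        have : ((D / n + 1 : ℤ) : ℝ) * n = (((D / n : ℤ) : ℝ) + 1) * n := by push_cast; ring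
        rw [← this]
        exact_mod_cast hDk1

end Shi
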